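/- arXiv:2301.07428 — 3 statements merged into one kernel-verified Lean document; each statement's English description precedes it below -/
import Mathlib

section
/- For any unit vector h in the tensor product H₁ ⊗ H₂ of finite-dimensional Hilbert spaces, the square of its largest Schmidt coefficient equals the supremum over all unit simple tensors x ⊗ y of |⟨h, x ⊗ y⟩|². -/
noncomputable section

/-- The simple tensor `x ⊗ y` of two vectors, realized in `EuclideanSpace ℂ (ι × κ)`. -/
def tens {ι κ : Type*} [Fintype ι] [Fintype κ] (x : EuclideanSpace ℂ ι) (y : EuclideanSpace ℂ κ) :
    EuclideanSpace ℂ (ι × κ) :=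
  WithLp.toLp 2 (fun p : ι × κ => x p.1 * y p.2)

/-- `h = ∑ i, μ i • (u i ⊗ v i)` is a Schmidt decomposition of `h`. -/
def IsSchmidt {ι κ : Type*} [Fintype ι] [Fintype κ] (h : EuclideanSpace ℂ (ι × κ)) {r : ℕ}
    (μ : Fin r → ℝ) (u : Fin r → EuclideanSpace ℂ ι) (v : Fin r → EuclideanSpace ℂ κ) : Prop :=
  (∀ i, 0 ≤ μ i) ∧ Orthonormal ℂ u ∧ Orthonormal ℂ v ∧
    h = ∑ i, (μ i : ℂ) • tens (u i) (v i)

lemma inner_tens {ι κ : Type*} [Fintype ι] [Fintype κ]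
    (a c : EuclideanSpace ℂ ι) (b d : EuclideanSpace ℂ κ) :
    (inner ℂ (tens a b) (tens c d) : ℂ) = (inner ℂ a c : ℂ) * (inner ℂ b d : ℂ) := by
  simp only [EuclideanSpace.inner_eq_star_dotProduct]
  simp [dotProduct, tens, Fintype.sum_prod_type, Finset.sum_mul, Finset.mul_sum]
  rw [Finset.sum_comm]
  congr 1; ext i; congr 1; ext j; ring

lemma norm_tens {ι κ : Type*} [Fintype ι] [Fintype κ]
    (x : EuclideanSpace ℂ ι) (y : EuclideanSpace ℂ κ) :
    ‖tens x y‖ = ‖x‖ * ‖y‖ := by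
  have h1 := inner_tens x x y y
  have h3 : ‖tens x y‖ ^ 2 = (‖x‖ * ‖y‖) ^ 2 := by
    rw [norm_sq_eq_re_inner (𝕜 := ℂ), h1, inner_self_eq_norm_sq_to_K (𝕜 := ℂ),
      inner_self_eq_norm_sq_to_K (𝕜 := ℂ)]
    norm_num [← Complex.ofReal_pow, ← RCLike.ofReal_pow, ← RCLike.ofReal_mul, mul_pow]
  rw [← Real.sqrt_sq (norm_nonneg (tens x y)),
    ← Real.sqrt_sq (mul_nonneg (norm_nonneg x) (norm_nonneg y)), h3]

/-- for a unit vector `h` in the tensor product of two finite-dimensional Hilbert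
spaces, the square of the largest Schmidt coefficient equals the supremum, over unit simple
tensors `x ⊗ y`, of `|⟨h, x ⊗ y⟩|²`. -/
theorem schmidt_max_sq_eq_sup_inner {ι κ : Type*} [Fintype ι] [Fintype κ]
    (h : EuclideanSpace ℂ (ι × κ)) (hh : ‖h‖ = 1) {r : ℕ}
    (μ : Fin r → ℝ) (u : Fin r → EuclideanSpace ℂ ι) (v : Fin r → EuclideanSpace ℂ κ)
    (hS : IsSchmidt h μ u v) (μ₁ : ℝ) (hμ₁ : IsGreatest (Set.range μ) μ₁) :
    μ₁ ^ 2 = sSup {t : ℝ | ∃ (x : EuclideanSpace ℂ ι) (y : EuclideanSpace ℂ κ),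
      ‖tens x y‖ = 1 ∧ t = ‖(inner ℂ h (tens x y) : ℂ)‖ ^ 2} := by
  obtain ⟨hμpos, hu, hv, hdec⟩ := hS
  obtain ⟨⟨i₀, hi₀⟩, hub⟩ := hμ₁
  have hμ₁pos : 0 ≤ μ₁ := hi₀ ▸ hμpos i₀
  -- inner h (tens x y) = ∑ i, μ i * ⟪u i, x⟫ * ⟪v i, y⟫
  have key : ∀ (x : EuclideanSpace ℂ ι) (y : EuclideanSpace ℂ κ),
      (inner ℂ h (tens x y) : ℂ) = ∑ i, (μ i : ℂ) * (inner ℂ (u i) x : ℂ) * (inner ℂ (v i) y : ℂ) := by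
    intro x y
    rw [hdec, sum_inner]
    congr 1; ext i
    rw [inner_smul_left, inner_tens]
    simp [mul_assoc, Complex.conj_ofReal]
  -- the target greatest element
  refine (IsGreatest.csSup_eq ⟨?_, ?_⟩).symm
  · show ∃ x y, ‖tens x y‖ = 1 ∧ μ₁ ^ 2 = ‖(inner ℂ h (tens x y) : ℂ)‖ ^ 2
    refine ⟨u i₀, v i₀, by rw [norm_tens, hu.1 i₀, hv.1 i₀, mul_one], ?_⟩
    rw [key]
    have : ∀ i : Fin r, (μ i : ℂ) * (inner ℂ (u i) (u i₀) : ℂ) * (inner ℂ (v i) (v i₀) : ℂ)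
        = if i = i₀ then (μ i₀ : ℂ) else 0 := by
      intro i
      by_cases hii : i = i₀
      · subst hii
        simp [inner_self_eq_norm_sq_to_K (𝕜 := ℂ), hu.1 i, hv.1 i]
      · simp [hu.2 hii, hii]
    rw [Finset.sum_congr rfl (fun i _ => this i), Finset.sum_ite_eq' _ i₀,
      if_pos (Finset.mem_univ i₀)]
    simp [hi₀, abs_of_nonneg hμ₁pos]
  · rintro t ⟨x, y, hxy, rfl⟩
    rw [key]
    have hxy' : ‖x‖ * ‖y‖ = 1 := by rw [← norm_tens]; exact hxy
    set a : Fin r → ℝ := fun i => ‖(inner ℂ (u i) x : ℂ)‖ with ha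
    set b : Fin r → ℝ := fun i => ‖(inner ℂ (v i) y : ℂ)‖ with hb
    have h1 : ‖∑ i, (μ i : ℂ) * (inner ℂ (u i) x : ℂ) * (inner ℂ (v i) y : ℂ)‖
        ≤ μ₁ * ∑ i, a i * b i := by
      rw [Finset.mul_sum]
      refine le_trans (norm_sum_le _ _) (Finset.sum_le_sum fun i _ => ?_)
      rw [norm_mul, norm_mul, Complex.norm_real, Real.norm_of_nonneg (hμpos i), ← mul_assoc]
      exact mul_le_mul_of_nonneg_right
        (mul_le_mul_of_nonneg_right (hub ⟨i, rfl⟩) (norm_nonneg _)) (norm_nonneg _)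
    have h2 : (∑ i, a i * b i) ^ 2 ≤ (∑ i, a i ^ 2) * ∑ i, b i ^ 2 :=
      Finset.sum_mul_sq_le_sq_mul_sq _ _ _
    have hba : (∑ i, a i ^ 2) ≤ ‖x‖ ^ 2 := hu.sum_inner_products_le x
    have hbb : (∑ i, b i ^ 2) ≤ ‖y‖ ^ 2 := hv.sum_inner_products_le y
    have hab : (∑ i, a i * b i) ^ 2 ≤ 1 := by
      calc (∑ i, a i * b i) ^ 2 ≤ (∑ i, a i ^ 2) * ∑ i, b i ^ 2 := h2
        _ ≤ ‖x‖ ^ 2 * ‖y‖ ^ 2 :=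
            mul_le_mul hba hbb (Finset.sum_nonneg fun i _ => sq_nonneg _) (sq_nonneg _)
        _ = 1 := by rw [← mul_pow, hxy']; norm_num
    have habnn : 0 ≤ ∑ i, a i * b i :=
      Finset.sum_nonneg fun i _ => mul_nonneg (norm_nonneg _) (norm_nonneg _)
    have hns : (0:ℝ) ≤ ‖∑ i, (μ i : ℂ) * (inner ℂ (u i) x : ℂ) * (inner ℂ (v i) y : ℂ)‖ :=
      norm_nonneg _
    nlinarith [mul_le_mul h1 h1 hns (mul_nonneg hμ₁pos habnn), sq_nonneg μ₁,
      mul_le_mul_of_nonneg_left hab (sq_nonneg μ₁)]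
end
end

section
/- For d ≥ 2, the largest Schmidt coefficient μ₁ of any unit vector in the antisymmetric subspace of ℂᵈ ⊗ ℂᵈ satisfies μ₁² ≤ 1/2. -/
noncomputable section

/-- The antisymmetric subspace of `ℂᵈ ⊗ ℂᵈ`, spanned by `(eᵢ ⊗ eⱼ - eⱼ ⊗ eᵢ)/√2` for `i < j`. -/
def antisym (d : ℕ) : Submodule ℂ (EuclideanSpace ℂ (Fin d × Fin d)) :=
  Submodule.span ℂ {w | ∃ i j : Fin d, i < j ∧
    w = ((Real.sqrt 2 : ℂ))⁻¹ •
      (tens (EuclideanSpace.single i 1) (EuclideanSpace.single j 1) -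
       tens (EuclideanSpace.single j 1) (EuclideanSpace.single i 1))}

open scoped InnerProductSpace

lemma tens_inner {ι κ : Type*} [Fintype ι] [Fintype κ] (x a : EuclideanSpace ℂ ι)
    (y b : EuclideanSpace ℂ κ) : ⟪tens x y, tens a b⟫_ℂ = ⟪x, a⟫_ℂ * ⟪y, b⟫_ℂ := by
  simp only [PiLp.inner_apply, RCLike.inner_apply, tens, PiLp.toLp_apply]
  rw [Finset.sum_mul_sum, ← Finset.univ_product_univ, Finset.sum_product]
  simp only [map_mul]
  congr 1; ext i; congr 1; ext j; ring

lemma antisym_swap {d : ℕ} {ξ : EuclideanSpace ℂ (Fin d × Fin d)} (h : ξ ∈ antisym d)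
    (i j : Fin d) : ξ (j, i) = - ξ (i, j) := by
  revert i j
  induction h using Submodule.span_induction with
  | mem w hw =>
    obtain ⟨a, b, hab, rfl⟩ := hw
    intro i j
    simp only [PiLp.smul_apply, PiLp.sub_apply, tens, PiLp.toLp_apply, EuclideanSpace.single_apply, smul_eq_mul]
    split_ifs <;> (try subst_vars) <;> ring
  | zero => intro i j; simp only [PiLp.zero_apply, neg_zero]
  | add x y _ _ hx hy => intro i j; simp only [PiLp.add_apply]; rw [hx, hy]; ring
  | smul c x _ hx => intro i j; simp only [PiLp.smul_apply, smul_eq_mul]; rw [hx]; ring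

lemma inner_tens_swap {d : ℕ} (x y : EuclideanSpace ℂ (Fin d))
    {ξ : EuclideanSpace ℂ (Fin d × Fin d)} (hξ : ξ ∈ antisym d) :
    ⟪tens y x, ξ⟫_ℂ = - ⟪tens x y, ξ⟫_ℂ := by
  simp only [PiLp.inner_apply, RCLike.inner_apply, tens, PiLp.toLp_apply, ← Finset.sum_neg_distrib]
  apply Fintype.sum_equiv (Equiv.prodComm (Fin d) (Fin d))
  rintro ⟨a, b⟩
  simp only [Equiv.prodComm_apply, Prod.swap_prod_mk, map_mul]
  rw [antisym_swap hξ b a]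
  ring

/-- for `d ≥ 2`, the largest Schmidt coefficient `μ₁` of any unit vector in the
antisymmetric subspace of `ℂᵈ ⊗ ℂᵈ` satisfies `μ₁² ≤ 1/2`. -/
theorem schmidt_max_sq_le_half_of_antisym (d : ℕ) (hd : 2 ≤ d)
    (ξ : EuclideanSpace ℂ (Fin d × Fin d)) (hξA : ξ ∈ antisym d) (hξ : ‖ξ‖ = 1) {r : ℕ}
    (μ : Fin r → ℝ) (u v : Fin r → EuclideanSpace ℂ (Fin d))
    (hS : IsSchmidt ξ μ u v) (μ₁ : ℝ) (hμ₁ : IsGreatest (Set.range μ) μ₁) :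
    μ₁ ^ 2 ≤ 1 / 2 := by
  obtain ⟨hpos, hu, hv, heq⟩ := hS
  obtain ⟨i, hi⟩ := hμ₁.1
  have h0 : 0 ≤ μ₁ := hi ▸ hpos i
  set x := u i with hx
  set y := v i with hy
  have hxn : ‖x‖ = 1 := hu.1 i
  have hyn : ‖y‖ = 1 := hv.1 i
  -- the Schmidt coefficient is the inner product with the product vector
  have hcoef : ⟪tens x y, ξ⟫_ℂ = (μ i : ℂ) := by
    rw [heq, inner_sum]
    simp only [inner_smul_right, tens_inner, orthonormal_iff_ite.mp hu,
      orthonormal_iff_ite.mp hv, hx, hy]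
    simp [Finset.sum_ite_eq, eq_comm]
  set w := tens x y - tens y x with hw
  have hinner : ⟪w, ξ⟫_ℂ = 2 * (μ i : ℂ) := by
    rw [hw, inner_sub_left, inner_tens_swap x y hξA, hcoef]
    ring
  -- norm bound on w
  have hyx : ⟪y, x⟫_ℂ = (starRingEnd ℂ) ⟪x, y⟫_ℂ := (inner_conj_symm y x).symm
  have hnormsq : ⟪w, w⟫_ℂ = 2 - 2 * (Complex.normSq ⟪x, y⟫_ℂ : ℂ) := by
    rw [hw, inner_sub_sub_self, tens_inner, tens_inner, tens_inner, tens_inner,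
      inner_self_eq_norm_sq_to_K, inner_self_eq_norm_sq_to_K, hxn, hyn, hyx,
      mul_comm ((starRingEnd ℂ) ⟪x, y⟫_ℂ) ⟪x, y⟫_ℂ, Complex.mul_conj]
    push_cast
    ring
  have hw2 : ‖w‖ ^ 2 ≤ 2 := by
    have h1 : ‖w‖ ^ 2 = (⟪w, w⟫_ℂ).re := by
      exact_mod_cast (norm_sq_eq_re_inner (𝕜 := ℂ) w)
    have h2 : (2 - 2 * (Complex.normSq ⟪x, y⟫_ℂ : ℂ)).re
        = 2 - 2 * Complex.normSq ⟪x, y⟫_ℂ := by simp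
    have hn := Complex.normSq_nonneg ⟪x, y⟫_ℂ
    rw [h1, hnormsq, h2]
    linarith
  have hle : 2 * μ₁ ≤ ‖w‖ := by
    have h1 : ‖⟪w, ξ⟫_ℂ‖ ≤ ‖w‖ * ‖ξ‖ := norm_inner_le_norm w ξ
    rw [hinner, hξ, mul_one] at h1
    have h2 : ‖(2 * (μ i : ℂ))‖ = 2 * μ₁ := by
      rw [← hi]
      rw [norm_mul]
      simp [Complex.norm_real, abs_of_nonneg (hpos i)]
    linarith [h2 ▸ h1]
  nlinarith [norm_nonneg w]
end
end

section
/- The linear span of the set of all d × d symmetric permutation matrices has dimension 1 + C(d,2) = 1 + d(d−1)/2. -/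
open Matrix

noncomputable section

/-- The permutation matrix of `σ`, with entries `Π i j = [σ j = i]`. -/
def permMat {d : ℕ} (σ : Equiv.Perm (Fin d)) : Matrix (Fin d) (Fin d) ℂ :=
  Matrix.of fun i j => if σ j = i then 1 else 0

namespace SymPermAux

abbrev PairIdx (d : ℕ) := {p : Fin d × Fin d // p.1 < p.2}

lemma permMat_apply {d : ℕ} (σ : Equiv.Perm (Fin d)) (i j : Fin d) :
    permMat σ i j = if σ j = i then 1 else 0 := rfl

lemma permMat_transpose {d : ℕ} (σ : Equiv.Perm (Fin d)) :
    (permMat σ)ᵀ = permMat σ⁻¹ := by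
  ext i j
  simp only [transpose_apply, permMat_apply]
  congr 1
  simp only [eq_iff_iff]
  constructor
  · rintro rfl; simp
  · rintro rfl; simp

lemma involution_of_symm {d : ℕ} {σ : Equiv.Perm (Fin d)}
    (h : (permMat σ)ᵀ = permMat σ) (x : Fin d) : σ (σ x) = x := by
  rw [permMat_transpose] at h
  have h2 := congrFun (congrFun h x) (σ x)
  simp only [permMat_apply, Equiv.Perm.inv_def, Equiv.symm_apply_apply, if_pos rfl] at h2
  by_contra hc
  rw [if_neg hc] at h2
  norm_num at h2

lemma decomp {d : ℕ} (σ : Equiv.Perm (Fin d)) (hσ : ∀ x, σ (σ x) = x) :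
    permMat σ = permMat 1 +
      ∑ p ∈ Finset.univ.filter (fun p : PairIdx d => σ p.1.1 = p.1.2),
        (permMat (Equiv.swap p.1.1 p.1.2) - permMat 1) := by
  ext i j
  simp only [Matrix.add_apply, Matrix.sum_apply, Matrix.sub_apply, permMat_apply,
    Equiv.Perm.one_apply]
  by_cases h1 : σ j = i
  · by_cases h2 : j = i
    · subst h2
      rw [Finset.sum_eq_zero]
      · simp [h1]
      · rintro ⟨⟨a, b⟩, hab⟩ hp
        simp only [Finset.mem_filter] at hp
        have hja : j ≠ a := by rintro rfl; rw [h1] at hp; exact absurd hp.2.symm (ne_of_gt hab)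
        have hjb : j ≠ b := by
          rintro rfl
          have : a = σ j := by rw [← hp.2, hσ a]
          rw [h1] at this; exact absurd hab (by simp [this])
        simp [Equiv.swap_apply_of_ne_of_ne hja hjb]
    · rcases lt_or_gt_of_ne h2 with hji | hij
      · rw [Finset.sum_eq_single_of_mem (⟨(j, i), hji⟩ : PairIdx d)
            (by simp [Finset.mem_filter, h1])]
        · simp [h1, h2, Equiv.swap_apply_left]
        · rintro ⟨⟨a, b⟩, hab⟩ hp hne
          simp only [Finset.mem_filter] at hp
          have hc : Equiv.swap a b j ≠ i := by
            intro hc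
            rcases eq_or_ne j a with rfl | hja
            · rw [Equiv.swap_apply_left] at hc
              exact hne (by simp [Subtype.ext_iff, Prod.ext_iff, hc])
            · rcases eq_or_ne j b with rfl | hjb
              · rw [Equiv.swap_apply_right] at hc
                subst hc
                -- p = (i, j) with σ i = j, but also j < i and i < j? hab : i < j contra hji
                exact absurd hab (not_lt.2 (le_of_lt hji))
              · rw [Equiv.swap_apply_of_ne_of_ne hja hjb] at hc
                exact h2 hc
          simp [hc, h2]
      · have hsij : σ i = j := by rw [← h1, hσ]
        rw [Finset.sum_eq_single_of_mem (⟨(i, j), hij⟩ : PairIdx d)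
            (by simp [Finset.mem_filter, hsij])]
        · simp [h1, h2, Equiv.swap_apply_right]
        · rintro ⟨⟨a, b⟩, hab⟩ hp hne
          simp only [Finset.mem_filter] at hp
          have hc : Equiv.swap a b j ≠ i := by
            intro hc
            rcases eq_or_ne j a with rfl | hja
            · rw [Equiv.swap_apply_left] at hc
              subst hc
              -- p = (j, b) with σ j = b, but σ j = i so b = i, b > j > i contra hab? hab : j < b, i < j, b = i
              rw [h1] at hp
              exact absurd hab (by rw [hp.2]; exact not_lt.2 (le_of_lt hij))
            · rcases eq_or_ne j b with rfl | hjb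
              · rw [Equiv.swap_apply_right] at hc
                subst hc
                exact hne (by simp [Subtype.ext_iff, Prod.ext_iff])
              · rw [Equiv.swap_apply_of_ne_of_ne hja hjb] at hc
                exact h2 hc
          simp [hc, h2]
  · by_cases h2 : j = i
    · subst h2
      have hne : σ j ≠ j := h1
      rcases lt_or_gt_of_ne hne with hlt | hgt
      · rw [Finset.sum_eq_single_of_mem (⟨(σ j, j), hlt⟩ : PairIdx d)
            (by simp [Finset.mem_filter, hσ j])]
        · simp [h1, Equiv.swap_apply_right]
        · rintro ⟨⟨a, b⟩, hab⟩ hp hne'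
          simp only [Finset.mem_filter] at hp
          have hja : j ≠ a := by
            rintro rfl
            have : b = σ j := hp.2.symm
            subst this
            exact absurd hab (not_lt.2 (le_of_lt hlt))
          have hjb : j ≠ b := by
            rintro rfl
            have ha : a = σ j := by rw [← hp.2, hσ a]
            exact hne' (by simp [Subtype.ext_iff, Prod.ext_iff, ha])
          simp [Equiv.swap_apply_of_ne_of_ne hja hjb]
      · rw [Finset.sum_eq_single_of_mem (⟨(j, σ j), hgt⟩ : PairIdx d)
            (by simp [Finset.mem_filter])]
        · simp [h1, Equiv.swap_apply_left]
        · rintro ⟨⟨a, b⟩, hab⟩ hp hne'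
          simp only [Finset.mem_filter] at hp
          have hja : j ≠ a := by
            rintro rfl
            exact hne' (by simp [Subtype.ext_iff, Prod.ext_iff, hp.2.symm])
          have hjb : j ≠ b := by
            rintro rfl
            have ha : a = σ j := by rw [← hp.2, hσ a]
            subst ha
            exact absurd hab (not_lt.2 (le_of_lt hgt))
          simp [Equiv.swap_apply_of_ne_of_ne hja hjb]
    · rw [Finset.sum_eq_zero]
      · simp [h1, h2]
      · rintro ⟨⟨a, b⟩, hab⟩ hp
        simp only [Finset.mem_filter] at hp
        have hc : Equiv.swap a b j ≠ i := by
          intro hc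
          rcases eq_or_ne j a with rfl | hja
          · rw [Equiv.swap_apply_left] at hc; subst hc; exact h1 hp.2
          · rcases eq_or_ne j b with rfl | hjb
            · rw [Equiv.swap_apply_right] at hc
              subst hc
              exact h1 (by rw [← hp.2, hσ])
            · rw [Equiv.swap_apply_of_ne_of_ne hja hjb] at hc; exact h2 hc
        simp [hc, h2]


noncomputable def fam (d : ℕ) : Option (PairIdx d) → Matrix (Fin d) (Fin d) ℂ
  | none => permMat 1
  | some p => permMat (Equiv.swap p.1.1 p.1.2) - permMat 1

lemma fam_indep (d : ℕ) (hd : 1 ≤ d) : LinearIndependent ℂ (fam d) := by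
  rw [Fintype.linearIndependent_iff]
  intro g hg
  rw [Fintype.sum_option] at hg
  have entry : ∀ a b : Fin d,
      g none * permMat (1 : Equiv.Perm (Fin d)) a b
        + ∑ p : PairIdx d, g (some p) *
            (permMat (Equiv.swap p.1.1 p.1.2) a b - permMat (1 : Equiv.Perm (Fin d)) a b) = 0 := by
    intro a b
    have h := congrFun (congrFun hg a) b
    simpa only [fam, Matrix.add_apply, Matrix.sum_apply, Matrix.smul_apply, Matrix.sub_apply,
      Matrix.zero_apply, smul_eq_mul] using h
  have hsome : ∀ p : PairIdx d, g (some p) = 0 := by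
    rintro ⟨⟨a, b⟩, hab⟩
    have hab' : b ≠ a := ne_of_gt hab
    have h := entry a b
    simp only [permMat_apply, if_neg (show (1 : Equiv.Perm (Fin d)) b ≠ a from hab'), mul_zero, sub_zero,
      zero_add] at h
    have hs : (∑ p : PairIdx d, g (some p) *
        (if (Equiv.swap p.1.1 p.1.2) b = a then (1 : ℂ) else 0)) =
        g (some ⟨(a, b), hab⟩) := by
      rw [Finset.sum_eq_single_of_mem (⟨(a, b), hab⟩ : PairIdx d) (Finset.mem_univ _)]
      · simp [Equiv.swap_apply_right]
      · rintro ⟨⟨x, y⟩, hxy⟩ _ hne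
        have hc : Equiv.swap x y b ≠ a := by
          intro hc
          rcases eq_or_ne b x with rfl | hbx
          · rw [Equiv.swap_apply_left] at hc
            subst hc
            exact absurd hxy (not_lt.2 (le_of_lt hab))
          · rcases eq_or_ne b y with rfl | hby
            · rw [Equiv.swap_apply_right] at hc
              subst hc
              exact hne (by simp [Subtype.ext_iff, Prod.ext_iff])
            · rw [Equiv.swap_apply_of_ne_of_ne hbx hby] at hc
              exact hab' hc
        simp [hc]
    rw [hs] at h
    exact h
  intro i
  match i with
  | some p => exact hsome p
  | none =>
    have h := entry ⟨0, hd⟩ ⟨0, hd⟩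
    simp only [hsome, zero_mul, Finset.sum_const_zero, add_zero, permMat_apply,
      Equiv.Perm.one_apply, if_pos rfl, mul_one] at h
    simpa using h

open Submodule in
lemma span_eq (d : ℕ) :
    Submodule.span ℂ {M : Matrix (Fin d) (Fin d) ℂ |
        ∃ σ : Equiv.Perm (Fin d), M = permMat σ ∧ Mᵀ = M} =
      Submodule.span ℂ (Set.range (fam d)) := by
  apply le_antisymm
  · rw [span_le]
    rintro M ⟨σ, rfl, hM⟩
    have hσ := involution_of_symm hM
    rw [SetLike.mem_coe, decomp σ hσ]
    apply add_mem
    · exact subset_span ⟨none, rfl⟩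
    · exact sum_mem fun p _ => subset_span ⟨some p, rfl⟩
  · rw [span_le]
    rintro M ⟨i, rfl⟩
    have hmem : ∀ σ : Equiv.Perm (Fin d), σ⁻¹ = σ → permMat σ ∈
        Submodule.span ℂ {M : Matrix (Fin d) (Fin d) ℂ |
          ∃ σ : Equiv.Perm (Fin d), M = permMat σ ∧ Mᵀ = M} :=
      fun σ hσ => subset_span ⟨σ, rfl, by rw [permMat_transpose, hσ]⟩
    match i with
    | none => exact hmem 1 rfl
    | some p => exact sub_mem (hmem _ (Equiv.swap_inv _ _)) (hmem 1 rfl)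

def pairEquiv (d : ℕ) : PairIdx d ≃ Σ j : Fin d, Fin j.val where
  toFun p := ⟨p.1.2, ⟨p.1.1, p.2⟩⟩
  invFun s := ⟨(⟨s.2.1, lt_trans s.2.2 s.1.2⟩, s.1), s.2.2⟩
  left_inv p := by ext <;> rfl
  right_inv s := by ext <;> rfl

lemma card_pairIdx (d : ℕ) : Fintype.card (PairIdx d) = d.choose 2 := by
  rw [Fintype.card_congr (pairEquiv d), Fintype.card_sigma]
  simp only [Fintype.card_fin]
  rw [Fin.sum_univ_eq_sum_range (fun i => i) d, Finset.sum_range_id, Nat.choose_two_right]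

end SymPermAux

open SymPermAux in
/-- the linear span (inside `M_d(ℂ)`) of the set of all `d × d` symmetric
permutation matrices has dimension `1 + C(d,2) = 1 + d(d-1)/2`. -/
theorem finrank_span_symmetric_perm_matrices (d : ℕ) (hd : 1 ≤ d) :
    Module.finrank ℂ
      (Submodule.span ℂ {M : Matrix (Fin d) (Fin d) ℂ |
        ∃ σ : Equiv.Perm (Fin d), M = permMat σ ∧ Mᵀ = M}) = 1 + d.choose 2 := by
  rw [span_eq d, finrank_span_eq_card (fam_indep d hd), Fintype.card_option,
    card_pairIdx, add_comm]
end
end
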